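/- Let μ > 0, λ ∈ (0,1), and a, a0 ∈ [−1,1] with a0 < 0, a > 0, and (1−λ)a + λa0 < 0. Set D = (1−λ)²a² − λ²a0². Then x̃ = 1, ρ1 = λa0/(μD), and ρ = −2(1−λ)a/(μD) satisfy ρ1 > 0, ρ > 0, ρ < 2ρ1, and the Configuration-II equilibrium equations (E1) (1−λ)μa + λμa0·ρ/(2ρ1) + (1−x̃)/ρ = 0 and (E2) (1−λ)μa·ρ/(2ρ1) + λμa0 + 1/ρ1 = 0. -/

import Mathlib

/-- Configuration II, non-collinear circling equilibrium: if
a0 < 0, a > 0, (1−λ)a + λa0 < 0 and D = (1−λ)²a² − λ²a0², then x̃ = 1,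
ρ1 = λa0/(μD), ρ = −2(1−λ)a/(μD) satisfy ρ1 > 0, ρ > 0, ρ < 2ρ1, and the
equilibrium equations (E1) and (E2). -/
theorem stmt11 (μ lam a a0 D xt ρ ρ1 : ℝ)
    (hμ : μ > 0) (hlam1 : 0 < lam) (hlam2 : lam < 1)
    (ha : a ∈ Set.Icc (-1 : ℝ) 1) (ha0 : a0 ∈ Set.Icc (-1 : ℝ) 1)
    (ha0neg : a0 < 0) (hapos : a > 0)
    (hcond : (1 - lam) * a + lam * a0 < 0)
    (hD : D = (1 - lam) ^ 2 * a ^ 2 - lam ^ 2 * a0 ^ 2)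
    (hxt : xt = 1)
    (hρ1 : ρ1 = lam * a0 / (μ * D))
    (hρ : ρ = -(2 * (1 - lam) * a) / (μ * D)) :
    ρ1 > 0 ∧ ρ > 0 ∧ ρ < 2 * ρ1 ∧
    (1 - lam) * μ * a + lam * μ * a0 * (ρ / (2 * ρ1)) + (1 - xt) / ρ = 0 ∧
    (1 - lam) * μ * a * (ρ / (2 * ρ1)) + lam * μ * a0 + 1 / ρ1 = 0 := by
  have h1lam : 0 < 1 - lam := by linarith
  have hdiff : 0 < (1 - lam) * a - lam * a0 := by nlinarith
  have hDneg : D < 0 := by nlinarith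
  have hμD : μ * D < 0 := mul_neg_of_pos_of_neg hμ hDneg
  have hμDne : μ * D ≠ 0 := ne_of_lt hμD
  have hla0 : lam * a0 < 0 := mul_neg_of_pos_of_neg hlam1 ha0neg
  have hla0ne : lam * a0 ≠ 0 := ne_of_lt hla0
  have hρ1pos : ρ1 > 0 := by
    rw [hρ1]; exact div_pos_of_neg_of_neg hla0 hμD
  have hρpos : ρ > 0 := by
    rw [hρ]; apply div_pos_of_neg_of_neg _ hμD; nlinarith
  have hsub : ρ - 2 * ρ1 = (-2 * ((1 - lam) * a + lam * a0)) / (μ * D) := by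
    rw [hρ, hρ1]; field_simp; ring
  have hlt : ρ < 2 * ρ1 := by
    have : ρ - 2 * ρ1 < 0 := by
      rw [hsub]; exact div_neg_of_pos_of_neg (by nlinarith) hμD
    linarith
  have hρ1ne : ρ1 ≠ 0 := ne_of_gt hρ1pos
  have hratio : ρ / (2 * ρ1) = -((1 - lam) * a) / (lam * a0) := by
    rw [hρ, hρ1]; field_simp [ha0neg.ne, hDneg.ne, hlam1.ne', hμ.ne']
  have hinv : 1 / ρ1 = μ * D / (lam * a0) := by
    rw [hρ1]; field_simp
  refine ⟨hρ1pos, hρpos, hlt, ?_, ?_⟩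
  · rw [hratio, hxt]
    field_simp [ha0neg.ne, hDneg.ne, hlam1.ne', hμ.ne']
    ring
  · rw [hratio, hinv]
    field_simp [ha0neg.ne, hDneg.ne, hlam1.ne', hμ.ne']
    linear_combination μ * hD
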